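/- With F and V as above and assuming η + μ > 0, γ_i + μ > 0, and β_i⁰ ≥ 0, η_i ≥ 0 for all i, the spectral radius of the next-generation matrix F·V⁻¹ equals ℛ₀ = Σ_{i=1}^M β_i⁰ η_i / ((γ_i + μ)(η + μ)). -/

import Mathlib

/-- The spectral radius of the next-generation matrix `F·V⁻¹` — the maximum of
the moduli of its complex eigenvalues — equals the basic reproduction number
`ℛ₀ = Σᵢ βᵢ⁰ ηᵢ / ((γᵢ + μ)(η + μ))`. -/
theorem next_generation_spectral_radius
    (M : ℕ) (hM : 1 ≤ M) (μ η : ℝ) (hμ : 0 ≤ μ)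
    (β0 ηv γ : Fin M → ℝ) (hβ0 : ∀ i, 0 ≤ β0 i) (hηv : ∀ i, 0 ≤ ηv i)
    (hγ : ∀ i, 0 ≤ γ i) (hη : η = ∑ i, ηv i)
    (hημ : 0 < η + μ) (hγμ : ∀ i, 0 < γ i + μ)
    (F V : Matrix (Fin (M + 1)) (Fin (M + 1)) ℝ)
    (hF00 : F 0 0 = 0)
    (hF0row : ∀ j : Fin M, F 0 j.succ = β0 j)
    (hFrest : ∀ (i : Fin M) (j : Fin (M + 1)), F i.succ j = 0)
    (hV00 : V 0 0 = η + μ)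
    (hV0row : ∀ j : Fin M, V 0 j.succ = 0)
    (hVcol : ∀ i : Fin M, V i.succ 0 = -ηv i)
    (hVdiag : ∀ i : Fin M, V i.succ i.succ = γ i + μ)
    (hVoff : ∀ i j : Fin M, i ≠ j → V i.succ j.succ = 0) :
    IsGreatest
      {x : ℝ | ∃ zc ∈ spectrum ℂ ((F * V⁻¹).map (Complex.ofReal : ℝ → ℂ)),
        x = ‖zc‖}
      (∑ i, β0 i * ηv i / ((γ i + μ) * (η + μ))) := by
  have hημ' : η + μ ≠ 0 := ne_of_gt hημ
  have hγμ' : ∀ i, γ i + μ ≠ 0 := fun i => ne_of_gt (hγμ i)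
  set R0 : ℝ := ∑ i, β0 i * ηv i / ((γ i + μ) * (η + μ)) with hR0
  -- the explicit inverse of V
  set W : Matrix (Fin (M+1)) (Fin (M+1)) ℝ := Matrix.of fun i j =>
    Fin.cases
      (Fin.cases ((η + μ)⁻¹) (fun _ => (0:ℝ)) j)
      (fun i' => Fin.cases (ηv i' / ((γ i' + μ) * (η + μ)))
        (fun j' => if i' = j' then (γ i' + μ)⁻¹ else 0) j) i with hWdef
  have hW00 : W 0 0 = (η + μ)⁻¹ := rfl
  have hW0row : ∀ j : Fin M, W 0 j.succ = 0 := fun j => by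
    simp [hWdef]
  have hWcol : ∀ i : Fin M, W i.succ 0 = ηv i / ((γ i + μ) * (η + μ)) := fun i => by
    simp [hWdef]
  have hWij : ∀ i j : Fin M, W i.succ j.succ = if i = j then (γ i + μ)⁻¹ else 0 :=
    fun i j => by simp [hWdef]
  have hVW : V * W = 1 := by
    ext i j
    rw [Matrix.mul_apply, Fin.sum_univ_succ]
    induction i using Fin.cases with
    | zero =>
      induction j using Fin.cases with
      | zero =>
        simp [hV00, hV0row, hW00, hημ']
      | succ j =>
        simp [hV00, hV0row, hW0row j, Matrix.one_apply, (Fin.succ_ne_zero j).symm]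
    | succ i =>
      have hsum : ∀ j0 : Fin (M+1), ∑ k : Fin M, V i.succ k.succ * W k.succ j0
          = (γ i + μ) * W i.succ j0 := by
        intro j0
        rw [Finset.sum_eq_single i]
        · rw [hVdiag]
        · intro b _ hb
          rw [hVoff i b (Ne.symm hb), zero_mul]
        · simp
      induction j using Fin.cases with
      | zero =>
        rw [hsum 0, hVcol, hW00, hWcol, Matrix.one_apply_ne (Fin.succ_ne_zero i)]
        have hkey : (γ i + μ) * (ηv i / ((γ i + μ) * (η + μ))) = ηv i * (η + μ)⁻¹ := by
          rw [← mul_div_assoc, mul_div_mul_left _ _ (hγμ' i), div_eq_mul_inv]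
        rw [hkey]
        ring
      | succ j =>
        rw [hsum j.succ, hVcol, hW0row, hWij, Matrix.one_apply]
        rcases eq_or_ne i j with rfl | hij
        · simp [hγμ' i]
        · simp [hij, fun h => hij (Fin.succ_injective _ h)]
  have hVinv : V⁻¹ = W := Matrix.inv_eq_right_inv hVW
  -- entries of A = F * V⁻¹
  set A : Matrix (Fin (M+1)) (Fin (M+1)) ℝ := F * W with hA
  have hA00 : A 0 0 = R0 := by
    rw [hA, Matrix.mul_apply, Fin.sum_univ_succ, hF00, zero_mul, zero_add, hR0]
    apply Finset.sum_congr rfl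
    intro k _
    rw [hF0row, hWcol, mul_div_assoc]
  have hArest : ∀ (i : Fin M) (j : Fin (M+1)), A i.succ j = 0 := by
    intro i j
    rw [hA, Matrix.mul_apply]
    simp [hFrest]
  -- complex version
  set B : Matrix (Fin (M+1)) (Fin (M+1)) ℂ := A.map (Complex.ofReal : ℝ → ℂ) with hB
  -- determinant of z•1 - B
  have hdet : ∀ z : ℂ, (z • (1 : Matrix (Fin (M+1)) (Fin (M+1)) ℂ) - B).det
      = (z - (R0 : ℂ)) * z ^ M := by
    intro z
    have htri : (z • (1 : Matrix (Fin (M+1)) (Fin (M+1)) ℂ) - B).BlockTriangular id := by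
      intro i j hij
      have hij' : j < i := hij
      have hi0 : i ≠ 0 := by
        intro h; subst h; exact absurd hij' (Fin.not_lt_zero j) -- j < 0 impossible
      obtain ⟨i', rfl⟩ : ∃ i' : Fin M, i'.succ = i :=
        ⟨i.pred hi0, Fin.succ_pred i hi0⟩
      have : B i'.succ j = 0 := by
        rw [hB, Matrix.map_apply, hArest, Complex.ofReal_zero]
      simp [this, Matrix.one_apply_ne (ne_of_gt hij'), Matrix.smul_apply]
    rw [Matrix.det_of_upperTriangular htri, Fin.prod_univ_succ]
    have h0 : (z • (1 : Matrix (Fin (M+1)) (Fin (M+1)) ℂ) - B) 0 0 = z - (R0 : ℂ) := by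
      simp [hB, hA00, Matrix.one_apply, Matrix.smul_apply]
    have hs : ∀ j : Fin M, (z • (1 : Matrix (Fin (M+1)) (Fin (M+1)) ℂ) - B) j.succ j.succ
        = z := by
      intro j
      have : B j.succ j.succ = 0 := by
        rw [hB, Matrix.map_apply, hArest, Complex.ofReal_zero]
      simp [this, Matrix.one_apply, Matrix.smul_apply]
    rw [h0]
    congr 1
    simp [hs]
  -- spectrum characterization
  have hspec : ∀ z : ℂ, z ∈ spectrum ℂ B ↔ z = (R0 : ℂ) ∨ z = 0 := by
    intro z
    rw [spectrum.mem_iff]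
    have halg : algebraMap ℂ (Matrix (Fin (M+1)) (Fin (M+1)) ℂ) z
        = z • (1 : Matrix (Fin (M+1)) (Fin (M+1)) ℂ) := Algebra.algebraMap_eq_smul_one z
    rw [halg, Matrix.isUnit_iff_isUnit_det, hdet, isUnit_iff_ne_zero]
    constructor
    · intro h
      by_contra hc
      push_neg at hc
      exact h (by
        apply mul_ne_zero
        · exact sub_ne_zero_of_ne (fun he => hc.1 he)
        · exact pow_ne_zero _ hc.2)
    · rintro (rfl | rfl)
      · simp
      · have : (0:ℂ) ^ M = 0 := zero_pow (by omega)
        simp [this]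
  have hBeq : (F * V⁻¹).map (Complex.ofReal : ℝ → ℂ) = B := by rw [hVinv]
  have hR0nonneg : 0 ≤ R0 := by
    apply Finset.sum_nonneg
    intro i _
    apply div_nonneg (mul_nonneg (hβ0 i) (hηv i))
    exact mul_nonneg (le_of_lt (hγμ i)) (le_of_lt hημ)
  constructor
  · refine ⟨(R0 : ℂ), ?_, ?_⟩
    · rw [hBeq, hspec]; left; rfl
    · rw [Complex.norm_real, Real.norm_eq_abs, abs_of_nonneg hR0nonneg]
  · rintro x ⟨zc, hzc, rfl⟩
    rw [hBeq, hspec] at hzc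
    rcases hzc with rfl | rfl
    · rw [Complex.norm_real, Real.norm_eq_abs, abs_of_nonneg hR0nonneg]
    · simpa using hR0nonneg
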